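/- With Γ₁ as above, for all 1 ≤ i, j ≤ n and multi-indices k, the intertwining identity X_{−δ_j}(Γ₁(x^k ⊗ v_{n+i})) = Γ₁((1/√2) k_j x^{k−δ_j} ⊗ v_{n+i} − √2 k_i x^{k−δ_i} ⊗ v_{n+j}) holds. -/

import Mathlib

open Finsupp

noncomputable section

abbrev V (n : ℕ) : Type := ((Fin n →₀ ℕ) × Fin (2*n+1)) →₀ ℂ

def b {n : ℕ} (k : Fin n →₀ ℕ) (j : Fin (2*n+1)) : V n := Finsupp.single (k, j) 1

def mkOp {n : ℕ} (g : (Fin n →₀ ℕ) × Fin (2*n+1) → V n) : V n →ₗ[ℂ] V n :=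
  Finsupp.lsum ℂ fun a => LinearMap.toSpanSingleton ℂ (V n) (g a)

def deg {n : ℕ} (k : Fin n →₀ ℕ) : ℕ := k.sum fun _ v => v

def sgn {n : ℕ} (k : Fin n →₀ ℕ) : ℂ := (-1) ^ deg k

def rt2 : ℂ := Real.sqrt 2

def idx0 {n : ℕ} : Fin (2*n+1) := ⟨0, by omega⟩

def idxLo {n : ℕ} (i : Fin n) : Fin (2*n+1) := ⟨i.1+1, by have := i.isLt; omega⟩

def idxHi {n : ℕ} (i : Fin n) : Fin (2*n+1) := ⟨n+i.1+1, by have := i.isLt; omega⟩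

/-- `T_i` applied to `x^k ⊗ v_j` (without the parity sign). -/
def TpApp {n : ℕ} (i : Fin n) (k : Fin n →₀ ℕ) (j : Fin (2*n+1)) : V n :=
  if j = idx0 then b k (idxLo i) else if j = idxHi i then b k idx0 else 0

/-- `T_{-i}` applied to `x^k ⊗ v_j` (without the parity sign). -/
def TmApp {n : ℕ} (i : Fin n) (k : Fin n →₀ ℕ) (j : Fin (2*n+1)) : V n :=
  if j = idx0 then -(b k (idxHi i)) else if j = idxLo i then b k idx0 else 0

/-- The action of the odd root vector `X_{δ_j}` on `ℂ[x] ⊗ ℂ^{1|2n}`. -/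
def Xplus {n : ℕ} (jj : Fin n) : V n →ₗ[ℂ] V n :=
  mkOp fun p => rt2⁻¹ • b (p.1 + Finsupp.single jj 1) p.2 + sgn p.1 • TpApp jj p.1 p.2

/-- The action of the odd root vector `X_{-δ_i}` on `ℂ[x] ⊗ ℂ^{1|2n}`. -/
def Xminus {n : ℕ} (i : Fin n) : V n →ₗ[ℂ] V n :=
  mkOp fun p => (rt2⁻¹ * (p.1 i : ℂ)) • b (p.1 - Finsupp.single i 1) p.2
    + sgn p.1 • TmApp i p.1 p.2

/-- `Γ_{w₂} = 1⊗1 + √2 ∑ ∂_i ⊗ T_i - √2 ∑ x_i ⊗ T_{-i}`. -/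
def Gamma2 {n : ℕ} : V n →ₗ[ℂ] V n :=
  mkOp fun p => b p.1 p.2
    + rt2 • ∑ i : Fin n, (sgn p.1 * (p.1 i : ℂ)) • TpApp i (p.1 - Finsupp.single i 1) p.2
    - rt2 • ∑ i : Fin n, sgn p.1 • TmApp i (p.1 + Finsupp.single i 1) p.2

/-- `Γ_{w₁} = 1⊗1 - √2 ∑ ∂_i ⊗ T_i + √2 ∑ x_i ⊗ T_{-i}`. -/
def Gamma1 {n : ℕ} : V n →ₗ[ℂ] V n :=
  mkOp fun p => b p.1 p.2
    - rt2 • ∑ i : Fin n, (sgn p.1 * (p.1 i : ℂ)) • TpApp i (p.1 - Finsupp.single i 1) p.2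
    + rt2 • ∑ i : Fin n, sgn p.1 • TmApp i (p.1 + Finsupp.single i 1) p.2


section Aux

variable {n : ℕ}

lemma mkOp_b (g : (Fin n →₀ ℕ) × Fin (2*n+1) → V n) (k : Fin n →₀ ℕ) (j : Fin (2*n+1)) :
    mkOp g (b k j) = g (k, j) := by
  simp [mkOp, b]

lemma idxHi_ne_idx0 (i : Fin n) : (idxHi i : Fin (2*n+1)) ≠ idx0 := by
  simp only [idxHi, idx0, ne_eq, Fin.mk.injEq]; omega

lemma idxHi_ne_idxLo (i i' : Fin n) : (idxHi i : Fin (2*n+1)) ≠ idxLo i' := by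
  have := i'.isLt
  simp only [idxHi, idxLo, ne_eq, Fin.mk.injEq]; omega

lemma idxHi_inj {i i' : Fin n} : (idxHi i : Fin (2*n+1)) = idxHi i' ↔ i = i' := by
  simp only [idxHi, Fin.mk.injEq]
  constructor
  · intro h; exact Fin.ext (by omega)
  · intro h; rw [h]

lemma idxLo_ne_idx0 (i : Fin n) : (idxLo i : Fin (2*n+1)) ≠ idx0 := by
  simp only [idxLo, idx0, ne_eq, Fin.mk.injEq]; omega

lemma TpApp_hi (i' i : Fin n) (k : Fin n →₀ ℕ) :
    TpApp i' k (idxHi i) = if i' = i then b k idx0 else 0 := by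
  rw [TpApp, if_neg (idxHi_ne_idx0 i)]
  by_cases h : i' = i
  · subst h; simp
  · rw [if_neg, if_neg h]
    rw [idxHi_inj]; exact fun hh => h hh.symm

lemma TmApp_hi (i' i : Fin n) (k : Fin n →₀ ℕ) : TmApp i' k (idxHi i) = 0 := by
  rw [TmApp, if_neg (idxHi_ne_idx0 i), if_neg (idxHi_ne_idxLo i i')]

lemma TmApp_0 (i : Fin n) (k : Fin n →₀ ℕ) : TmApp i k idx0 = -(b k (idxHi i)) := by
  rw [TmApp, if_pos rfl]

lemma Gamma1_hi (k : Fin n →₀ ℕ) (i : Fin n) :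
    Gamma1 (b k (idxHi i)) =
      b k (idxHi i) - (rt2 * (sgn k * (k i : ℂ))) • b (k - Finsupp.single i 1) idx0 := by
  rw [Gamma1, mkOp_b]
  have h1 : ∑ i' : Fin n, (sgn k * (k i' : ℂ)) • TpApp i' (k - Finsupp.single i' 1) (idxHi i)
      = (sgn k * (k i : ℂ)) • b (k - Finsupp.single i 1) idx0 := by
    rw [Finset.sum_eq_single i]
    · rw [TpApp_hi, if_pos rfl]
    · intro i' _ hne; rw [TpApp_hi, if_neg hne, smul_zero]
    · intro h; exact absurd (Finset.mem_univ i) h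
  have h2 : ∑ i' : Fin n, sgn k • TmApp i' (k + Finsupp.single i' 1) (idxHi i) = (0 : V n) := by
    apply Finset.sum_eq_zero; intro i' _; rw [TmApp_hi, smul_zero]
  rw [h1, h2, smul_zero, add_zero, smul_smul]

lemma Xminus_hi (jj : Fin n) (k : Fin n →₀ ℕ) (i : Fin n) :
    Xminus jj (b k (idxHi i)) =
      (rt2⁻¹ * (k jj : ℂ)) • b (k - Finsupp.single jj 1) (idxHi i) := by
  rw [Xminus, mkOp_b, TmApp_hi, smul_zero, add_zero]

lemma Xminus_0 (jj : Fin n) (k : Fin n →₀ ℕ) :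
    Xminus jj (b k idx0) =
      (rt2⁻¹ * (k jj : ℂ)) • b (k - Finsupp.single jj 1) idx0 - sgn k • b k (idxHi jj) := by
  rw [Xminus, mkOp_b, TmApp_0, smul_neg, ← sub_eq_add_neg]

lemma deg_sub {k : Fin n →₀ ℕ} {i : Fin n} (h : k i ≠ 0) :
    deg (k - Finsupp.single i 1) + 1 = deg k := by
  have hle : Finsupp.single i 1 ≤ k := by
    simpa [Finsupp.single_le_iff, Nat.one_le_iff_ne_zero] using h
  have hk : (k - Finsupp.single i 1) + Finsupp.single i 1 = k := tsub_add_cancel_of_le hle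
  have : deg ((k - Finsupp.single i 1) + Finsupp.single i 1)
      = deg (k - Finsupp.single i 1) + deg (Finsupp.single i 1) := by
    unfold deg
    exact Finsupp.sum_add_index' (fun _ => rfl) (fun _ _ _ => rfl)
  rw [hk] at this
  rw [this]
  congr 1
  rw [deg, Finsupp.sum_single_index rfl]

lemma sgn_sub {k : Fin n →₀ ℕ} {i : Fin n} (h : k i ≠ 0) :
    sgn (k - Finsupp.single i 1) = -sgn k := by
  rw [sgn, sgn, ← deg_sub h, pow_succ]
  ring

lemma sub_apply_self (k : Fin n →₀ ℕ) (i : Fin n) :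
    ((k - Finsupp.single i 1 : Fin n →₀ ℕ)) i = k i - 1 := by
  rw [Finsupp.tsub_apply, Finsupp.single_eq_same]

lemma sub_apply_ne (k : Fin n →₀ ℕ) {i j : Fin n} (h : i ≠ j) :
    ((k - Finsupp.single i 1 : Fin n →₀ ℕ)) j = k j := by
  rw [Finsupp.tsub_apply, Finsupp.single_eq_of_ne' h, Nat.sub_zero]

lemma sub_sub_comm (k : Fin n →₀ ℕ) (i j : Fin n) :
    k - Finsupp.single i 1 - Finsupp.single j 1 = k - Finsupp.single j 1 - Finsupp.single i 1 := by
  rw [tsub_tsub, tsub_tsub, add_comm]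

lemma sgn_mul_self (k : Fin n →₀ ℕ) : sgn k * sgn k = 1 := by
  rw [sgn, ← mul_pow]; norm_num

lemma rt2_mul_self : rt2 * rt2 = 2 := by
  rw [rt2, ← Complex.ofReal_mul, Real.mul_self_sqrt (by norm_num)]
  norm_num

lemma rt2_ne_zero : rt2 ≠ 0 := by
  intro h
  have := rt2_mul_self
  rw [h, mul_zero] at this
  norm_num at this

lemma rt2_inv_mul : rt2⁻¹ * rt2 = 1 := inv_mul_cancel₀ rt2_ne_zero

end Aux

/-- Intertwining identity for `Γ₁` and `X_{-δⱼ}` on `x^k ⊗ v_{n+i}`. -/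
theorem stmt15 (n : ℕ) (k : Fin n →₀ ℕ) (i j : Fin n) :
    Xminus j (Gamma1 (b k (idxHi i))) =
      Gamma1 ((rt2⁻¹ * (k j : ℂ)) • b (k - Finsupp.single j 1) (idxHi i)
        - (rt2 * (k i : ℂ)) • b (k - Finsupp.single i 1) (idxHi j)) := by
  rw [Gamma1_hi, map_sub, map_smul, Xminus_hi, Xminus_0,
    map_sub, map_smul, map_smul, Gamma1_hi, Gamma1_hi]
  by_cases hij : i = j
  · subst hij
    by_cases hki : k i = 0
    · simp [hki]
    · have hc : ((k i - 1 : ℕ) : ℂ) = (k i : ℂ) - 1 := by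
        have h1 : 1 ≤ k i := Nat.one_le_iff_ne_zero.mpr hki
        push_cast [h1]; ring
      rw [sgn_sub hki, sub_apply_self, hc]
      match_scalars
      · linear_combination (-rt2 * (k i : ℂ)) * sgn_mul_self k
      · linear_combination (-2 * sgn k * (k i : ℂ) * ((k i : ℂ) - 1)) * rt2_inv_mul
          + (sgn k * (k i : ℂ) * ((k i : ℂ) - 1)) * rt2_mul_self
  · by_cases hki : k i = 0
    · simp [hki, sub_apply_ne k (Ne.symm hij)]
    · by_cases hkj : k j = 0
      · rw [sgn_sub hki, sub_apply_ne k hij]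
        simp only [hkj, Nat.cast_zero, mul_zero, zero_smul, zero_sub, sub_zero, smul_neg]
        match_scalars
        linear_combination (-rt2 * (k i : ℂ)) * sgn_mul_self k
      · rw [sgn_sub hki, sgn_sub hkj, sub_apply_ne k hij, sub_apply_ne k (Ne.symm hij),
          sub_sub_comm k j i]
        match_scalars
        · ring
        · linear_combination (-2 * sgn k * (k i : ℂ) * (k j : ℂ)) * rt2_inv_mul
            + (sgn k * (k i : ℂ) * (k j : ℂ)) * rt2_mul_self
        · linear_combination (-rt2 * (k i : ℂ)) * sgn_mul_self k
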